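/- Let G be an infinite finitely generated abelian group isomorphic to ℤ^(m) ⊕ ℤ_{n_1} ⊕ … ⊕ ℤ_{n_k}, where m ≥ 1, each n_i ≥ 2, and n_{i+1} divides n_i for all 1 ≤ i ≤ k−1. If G is S_2-capable, then m ≥ 3. -/
import Mathlib

/-- The commutator `[a,b] = a⁻¹ * b⁻¹ * a * b`. -/
def pcomm {E : Type} [Group E] (a b : E) : E := a⁻¹ * b⁻¹ * a * b

/-- The word `w(x,y,z,u) = [[x,y],[z,u]]` defining the variety `S_2` of metabelian groups. -/
def metaW {E : Type} [Group E] (x y z u : E) : E := pcomm (pcomm x y) (pcomm z u)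

/-- The marginal set of a group `E` with respect to the variety `S_2` of metabelian
groups: all `a ∈ E` such that replacing any one argument `g` of `w` by `g * a`
leaves the value of `w` unchanged. -/
def s2MarginalSet (E : Type) [Group E] : Set E :=
  {a : E | ∀ x y z u : E,
    metaW (x * a) y z u = metaW x y z u ∧
    metaW x (y * a) z u = metaW x y z u ∧
    metaW x y (z * a) u = metaW x y z u ∧
    metaW x y z (u * a) = metaW x y z u}

/-- `G` is `S_2`-capable if `G ≅ E / V*(E)` for some group `E`, where `V*(E)` is the
marginal (normal) subgroup of `E` with respect to the variety of metabelian groups,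
i.e. the normal subgroup whose underlying set is `s2MarginalSet E`. -/
def IsS2Capable (G : Type) [Group G] : Prop :=
  ∃ (E : Type) (_ : Group E) (H : Subgroup E) (_ : H.Normal),
    (H : Set E) = s2MarginalSet E ∧ Nonempty (G ≃* E ⧸ H)

section Pure
variable {E : Type} [Group E]
lemma metaW_one1 (y z u : E) : metaW 1 y z u = 1 := by simp only [metaW, pcomm]; group
lemma metaW_one2 (x z u : E) : metaW x 1 z u = 1 := by simp only [metaW, pcomm]; group
lemma metaW_one3 (x y u : E) : metaW x y 1 u = 1 := by simp only [metaW, pcomm]; group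
lemma metaW_one4 (x y z : E) : metaW x y z 1 = 1 := by simp only [metaW, pcomm]; group
lemma pcomm_conj (g a b : E) : pcomm (g⁻¹ * a * g) (g⁻¹ * b * g) = g⁻¹ * pcomm a b * g := by
  simp only [pcomm]; group
lemma metaW_conj (g x y z u : E) :
    metaW (g⁻¹*x*g) (g⁻¹*y*g) (g⁻¹*z*g) (g⁻¹*u*g) = g⁻¹ * metaW x y z u * g := by
  simp only [metaW, pcomm_conj]
lemma pcomm_swap (a b : E) : pcomm b a = (pcomm a b)⁻¹ := by simp only [pcomm]; group
lemma metaW_pairswap (x y z u : E) : metaW z u x y = (metaW x y z u)⁻¹ := by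
  simp only [metaW]; rw [pcomm_swap]
lemma metaW_diag12 (a z u : E) : metaW a a z u = 1 := by simp only [metaW, pcomm]; group
lemma metaW_diag34 (x y a : E) : metaW x y a a = 1 := by simp only [metaW, pcomm]; group
lemma metaW_abab (a b : E) : metaW a b a b = 1 := by simp only [metaW, pcomm]; group
lemma metaW_abba (a b : E) : metaW a b b a = 1 := by simp only [metaW, pcomm]; group
lemma coset_eq (g x : E) : g⁻¹ * x * g = x * pcomm x g := by simp only [pcomm]; group

lemma comm_of_pcomm_eq_one {a b : E} (h : pcomm a b = 1) : a * b = b * a := by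
  have h' : a⁻¹ * b⁻¹ * a * b = 1 := h
  calc a * b = (b * a) * (a⁻¹ * b⁻¹ * a * b) := by group
    _ = b * a := by rw [h', mul_one]

lemma pcomm_mul_helper (b1 c b2 d : E) (hc : c * d = d * c)
    (hv1 : ∀ g, pcomm b1 d * g = g * pcomm b1 d) :
    pcomm (b1 * c * b2) d = pcomm b1 d * pcomm b2 d := by
  have e1 : d⁻¹ * b1 * d = b1 * pcomm b1 d := by simp only [pcomm]; group
  have e2 : d⁻¹ * b2 * d = b2 * pcomm b2 d := by simp only [pcomm]; group
  have e3 : d⁻¹ * c * d = c := by rw [mul_assoc, hc, ← mul_assoc, inv_mul_cancel, one_mul]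
  calc pcomm (b1 * c * b2) d
      = (b1*c*b2)⁻¹ * ((d⁻¹*b1*d) * ((d⁻¹*c*d) * (d⁻¹*b2*d))) := by simp only [pcomm]; group
    _ = (b1*c*b2)⁻¹ * ((b1 * pcomm b1 d) * (c * (b2 * pcomm b2 d))) := by rw [e1, e2, e3]
    _ = (b1*c*b2)⁻¹ * (b1 * ((pcomm b1 d * c) * b2)) * pcomm b2 d := by group
    _ = (b1*c*b2)⁻¹ * (b1 * ((c * pcomm b1 d) * b2)) * pcomm b2 d := by rw [hv1 c]
    _ = (b1*c*b2)⁻¹ * (b1 * (c * (pcomm b1 d * b2))) * pcomm b2 d := by group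
    _ = (b1*c*b2)⁻¹ * (b1 * (c * (b2 * pcomm b1 d))) * pcomm b2 d := by rw [hv1 b2]
    _ = pcomm b1 d * pcomm b2 d := by group

lemma word_mul1 (x1 x2 y : E) :
    pcomm (x1 * x2) y = pcomm x1 y * pcomm (pcomm x1 y) x2 * pcomm x2 y := by
  simp only [pcomm]; group

lemma pcomm_inv_left (b d : E) (hv : ∀ g, pcomm b d * g = g * pcomm b d) :
    pcomm b⁻¹ d = (pcomm b d)⁻¹ := by
  have h1 : pcomm b⁻¹ d = b * (pcomm b d)⁻¹ * b⁻¹ := by simp only [pcomm]; group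
  have h2 : b * (pcomm b d)⁻¹ = (pcomm b d)⁻¹ * b := by
    calc b * (pcomm b d)⁻¹ = (pcomm b d)⁻¹ * (pcomm b d * b) * (pcomm b d)⁻¹ := by group
      _ = (pcomm b d)⁻¹ * (b * pcomm b d) * (pcomm b d)⁻¹ := by rw [hv b]
      _ = (pcomm b d)⁻¹ * b := by group
  rw [h1, h2]; group
end Pure

section Main
variable {E : Type} [Group E]

lemma margin1 (H : Subgroup E) (hH : (H : Set E) = s2MarginalSet E)
    {a : E} (ha : a ∈ H) (x y z u : E) : metaW (x*a) y z u = metaW x y z u :=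
  ((show a ∈ s2MarginalSet E from hH ▸ ha) x y z u).1
lemma margin2 (H : Subgroup E) (hH : (H : Set E) = s2MarginalSet E)
    {a : E} (ha : a ∈ H) (x y z u : E) : metaW x (y*a) z u = metaW x y z u :=
  ((show a ∈ s2MarginalSet E from hH ▸ ha) x y z u).2.1
lemma margin3 (H : Subgroup E) (hH : (H : Set E) = s2MarginalSet E)
    {a : E} (ha : a ∈ H) (x y z u : E) : metaW x y (z*a) u = metaW x y z u :=
  ((show a ∈ s2MarginalSet E from hH ▸ ha) x y z u).2.2.1
lemma margin4 (H : Subgroup E) (hH : (H : Set E) = s2MarginalSet E)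
    {a : E} (ha : a ∈ H) (x y z u : E) : metaW x y z (u*a) = metaW x y z u :=
  ((show a ∈ s2MarginalSet E from hH ▸ ha) x y z u).2.2.2

lemma marginW1 (H : Subgroup E) (hH : (H : Set E) = s2MarginalSet E)
    {a : E} (ha : a ∈ H) (y z u : E) : metaW a y z u = 1 := by
  have := margin1 H hH ha 1 y z u; rwa [one_mul, metaW_one1] at this
lemma marginW2 (H : Subgroup E) (hH : (H : Set E) = s2MarginalSet E)
    {a : E} (ha : a ∈ H) (x z u : E) : metaW x a z u = 1 := by
  have := margin2 H hH ha x 1 z u; rwa [one_mul, metaW_one2] at this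
lemma marginW3 (H : Subgroup E) (hH : (H : Set E) = s2MarginalSet E)
    {a : E} (ha : a ∈ H) (x y u : E) : metaW x y a u = 1 := by
  have := margin3 H hH ha x y 1 u; rwa [one_mul, metaW_one3] at this
lemma marginW4 (H : Subgroup E) (hH : (H : Set E) = s2MarginalSet E)
    {a : E} (ha : a ∈ H) (x y z : E) : metaW x y z a = 1 := by
  have := margin4 H hH ha x y z 1; rwa [one_mul, metaW_one4] at this

lemma central (H : Subgroup E) (hH : (H : Set E) = s2MarginalSet E)
    (hcomm : ∀ x y : E, pcomm x y ∈ H) (x y z u g : E) :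
    metaW x y z u * g = g * metaW x y z u := by
  have key : metaW (g⁻¹*x*g) (g⁻¹*y*g) (g⁻¹*z*g) (g⁻¹*u*g) = metaW x y z u := by
    rw [coset_eq g x, margin1 H hH (hcomm x g)]
    rw [coset_eq g y, margin2 H hH (hcomm y g)]
    rw [coset_eq g z, margin3 H hH (hcomm z g)]
    rw [coset_eq g u, margin4 H hH (hcomm u g)]
  have h2 : g⁻¹ * metaW x y z u * g = metaW x y z u := (metaW_conj g x y z u).symm.trans key
  calc metaW x y z u * g = g * (g⁻¹ * metaW x y z u * g) := by group
    _ = g * metaW x y z u := by rw [h2]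

lemma commute_vals (H : Subgroup E) (hH : (H : Set E) = s2MarginalSet E)
    (hcomm : ∀ x y : E, pcomm x y ∈ H) (x y z u x' y' z' u' : E) :
    metaW x y z u * metaW x' y' z' u' = metaW x' y' z' u' * metaW x y z u :=
  central H hH hcomm x y z u (metaW x' y' z' u')

lemma mult1 (H : Subgroup E) (hH : (H : Set E) = s2MarginalSet E)
    (hcomm : ∀ x y : E, pcomm x y ∈ H) (x1 x2 y z u : E) :
    metaW (x1*x2) y z u = metaW x1 y z u * metaW x2 y z u := by
  have hc : pcomm (pcomm x1 y) x2 * pcomm z u = pcomm z u * pcomm (pcomm x1 y) x2 :=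
    comm_of_pcomm_eq_one (marginW1 H hH (hcomm x1 y) x2 z u)
  have hv1 : ∀ g, pcomm (pcomm x1 y) (pcomm z u) * g = g * pcomm (pcomm x1 y) (pcomm z u) :=
    fun g => central H hH hcomm x1 y z u g
  show pcomm (pcomm (x1*x2) y) (pcomm z u) = _
  rw [word_mul1]
  exact pcomm_mul_helper _ _ _ _ hc hv1

lemma swap12 (H : Subgroup E) (hH : (H : Set E) = s2MarginalSet E)
    (hcomm : ∀ x y : E, pcomm x y ∈ H) (x y z u : E) :
    metaW y x z u = (metaW x y z u)⁻¹ := by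
  show pcomm (pcomm y x) (pcomm z u) = _
  rw [pcomm_swap x y]
  exact pcomm_inv_left _ _ (fun g => central H hH hcomm x y z u g)

lemma mult2 (H : Subgroup E) (hH : (H : Set E) = s2MarginalSet E)
    (hcomm : ∀ x y : E, pcomm x y ∈ H) (x y1 y2 z u : E) :
    metaW x (y1*y2) z u = metaW x y1 z u * metaW x y2 z u := by
  have h0 : metaW x (y1*y2) z u = (metaW (y1*y2) x z u)⁻¹ := by
    rw [swap12 H hH hcomm (y1*y2) x z u]
  rw [h0, mult1 H hH hcomm y1 y2 x z u,
      swap12 H hH hcomm x y1 z u, swap12 H hH hcomm x y2 z u,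
      mul_inv_rev, inv_inv, inv_inv]
  exact commute_vals H hH hcomm x y2 z u x y1 z u

lemma mult3 (H : Subgroup E) (hH : (H : Set E) = s2MarginalSet E)
    (hcomm : ∀ x y : E, pcomm x y ∈ H) (x y z1 z2 u : E) :
    metaW x y (z1*z2) u = metaW x y z1 u * metaW x y z2 u := by
  have h0 : metaW x y (z1*z2) u = (metaW (z1*z2) u x y)⁻¹ := by
    rw [metaW_pairswap x y (z1*z2) u, inv_inv]
  rw [h0, mult1 H hH hcomm z1 z2 u x y,
      metaW_pairswap x y z1 u, metaW_pairswap x y z2 u,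
      mul_inv_rev, inv_inv, inv_inv]
  exact commute_vals H hH hcomm x y z2 u x y z1 u

lemma mult4 (H : Subgroup E) (hH : (H : Set E) = s2MarginalSet E)
    (hcomm : ∀ x y : E, pcomm x y ∈ H) (x y z u1 u2 : E) :
    metaW x y z (u1*u2) = metaW x y z u1 * metaW x y z u2 := by
  have h0 : metaW x y z (u1*u2) = (metaW z (u1*u2) x y)⁻¹ := by
    rw [metaW_pairswap x y z (u1*u2), inv_inv]
  rw [h0, mult2 H hH hcomm z u1 u2 x y,
      metaW_pairswap x y z u1, metaW_pairswap x y z u2,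
      mul_inv_rev, inv_inv, inv_inv]
  exact commute_vals H hH hcomm x y z u2 x y z u1

lemma pow1 (H : Subgroup E) (hH : (H : Set E) = s2MarginalSet E)
    (hcomm : ∀ x y : E, pcomm x y ∈ H) (a y z u : E) (c : ℕ) :
    metaW (a^c) y z u = (metaW a y z u)^c := by
  induction c with
  | zero => rw [pow_zero, pow_zero, metaW_one1]
  | succ c ih => rw [pow_succ, pow_succ, mult1 H hH hcomm, ih]

lemma pow2 (H : Subgroup E) (hH : (H : Set E) = s2MarginalSet E)
    (hcomm : ∀ x y : E, pcomm x y ∈ H) (x a z u : E) (c : ℕ) :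
    metaW x (a^c) z u = (metaW x a z u)^c := by
  induction c with
  | zero => rw [pow_zero, pow_zero, metaW_one2]
  | succ c ih => rw [pow_succ, pow_succ, mult2 H hH hcomm, ih]

lemma pow3 (H : Subgroup E) (hH : (H : Set E) = s2MarginalSet E)
    (hcomm : ∀ x y : E, pcomm x y ∈ H) (x y a u : E) (c : ℕ) :
    metaW x y (a^c) u = (metaW x y a u)^c := by
  induction c with
  | zero => rw [pow_zero, pow_zero, metaW_one3]
  | succ c ih => rw [pow_succ, pow_succ, mult3 H hH hcomm, ih]

lemma pow4 (H : Subgroup E) (hH : (H : Set E) = s2MarginalSet E)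
    (hcomm : ∀ x y : E, pcomm x y ∈ H) (x y z a : E) (c : ℕ) :
    metaW x y z (a^c) = (metaW x y z a)^c := by
  induction c with
  | zero => rw [pow_zero, pow_zero, metaW_one4]
  | succ c ih => rw [pow_succ, pow_succ, mult4 H hH hcomm, ih]

lemma inv1 (H : Subgroup E) (hH : (H : Set E) = s2MarginalSet E)
    (hcomm : ∀ x y : E, pcomm x y ∈ H) (a y z u : E) :
    metaW a⁻¹ y z u = (metaW a y z u)⁻¹ := by
  have h := mult1 H hH hcomm a⁻¹ a y z u
  rw [inv_mul_cancel, metaW_one1] at h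
  exact eq_inv_of_mul_eq_one_left h.symm

lemma inv2 (H : Subgroup E) (hH : (H : Set E) = s2MarginalSet E)
    (hcomm : ∀ x y : E, pcomm x y ∈ H) (x a z u : E) :
    metaW x a⁻¹ z u = (metaW x a z u)⁻¹ := by
  have h := mult2 H hH hcomm x a⁻¹ a z u
  rw [inv_mul_cancel, metaW_one2] at h
  exact eq_inv_of_mul_eq_one_left h.symm

lemma inv3 (H : Subgroup E) (hH : (H : Set E) = s2MarginalSet E)
    (hcomm : ∀ x y : E, pcomm x y ∈ H) (x y a u : E) :
    metaW x y a⁻¹ u = (metaW x y a u)⁻¹ := by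
  have h := mult3 H hH hcomm x y a⁻¹ a u
  rw [inv_mul_cancel, metaW_one3] at h
  exact eq_inv_of_mul_eq_one_left h.symm

lemma inv4 (H : Subgroup E) (hH : (H : Set E) = s2MarginalSet E)
    (hcomm : ∀ x y : E, pcomm x y ∈ H) (x y z a : E) :
    metaW x y z a⁻¹ = (metaW x y z a)⁻¹ := by
  have h := mult4 H hH hcomm x y z a⁻¹ a
  rw [inv_mul_cancel, metaW_one4] at h
  exact eq_inv_of_mul_eq_one_left h.symm
end Main
section Gen
variable {E : Type} [Group E]

/-- standard generators of the model group -/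
def genA (m k : ℕ) (n : Fin k → ℕ) (i : Fin m) :
    Multiplicative ((Fin m → ℤ) × ((j : Fin k) → ZMod (n j))) :=
  Multiplicative.ofAdd ((Pi.single i 1 : Fin m → ℤ), (0 : (j : Fin k) → ZMod (n j)))

def genB (m k : ℕ) (n : Fin k → ℕ) (j : Fin k) :
    Multiplicative ((Fin m → ℤ) × ((j : Fin k) → ZMod (n j))) :=
  Multiplicative.ofAdd ((0 : Fin m → ℤ), (Pi.single j 1 : (j : Fin k) → ZMod (n j)))

lemma gen (H : Subgroup E) [H.Normal] (m k : ℕ) (n : Fin k → ℕ)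
    (hn : ∀ j : Fin k, 2 ≤ n j)
    (e : Multiplicative ((Fin m → ℤ) × ((j : Fin k) → ZMod (n j))) ≃* E ⧸ H)
    (A : Fin m → E) (B : Fin k → E)
    (hA : ∀ i, (QuotientGroup.mk (A i) : E ⧸ H) = e (genA m k n i))
    (hB : ∀ j, (QuotientGroup.mk (B j) : E ⧸ H) = e (genB m k n j))
    (P : E → Prop) (hone : P 1)
    (hmul : ∀ {a b : E}, P a → P b → P (a*b))
    (hinv : ∀ {a : E}, P a → P a⁻¹)
    (hHP : ∀ a ∈ H, P a)
    (hPA : ∀ i, P (A i)) (hPB : ∀ j, P (B j)) :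
    ∀ x : E, P x := by
  intro x
  set M := Multiplicative ((Fin m → ℤ) × ((j : Fin k) → ZMod (n j))) with hM
  let T : AddSubgroup ((Fin m → ℤ) × ((j : Fin k) → ZMod (n j))) :=
  { carrier := {w | ∃ s, P s ∧ (QuotientGroup.mk s : E ⧸ H) = e (Multiplicative.ofAdd w)}
    zero_mem' := ⟨1, hone, by
      rw [QuotientGroup.mk_one]
      rw [show Multiplicative.ofAdd (0 : (Fin m → ℤ) × ((j : Fin k) → ZMod (n j))) = 1 from rfl]
      rw [map_one]⟩
    add_mem' := by
      rintro w1 w2 ⟨s1, hs1, h1⟩ ⟨s2, hs2, h2⟩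
      refine ⟨s1 * s2, hmul hs1 hs2, ?_⟩
      rw [QuotientGroup.mk_mul, h1, h2, ← map_mul]
      rfl
    neg_mem' := by
      rintro w ⟨s, hs, h⟩
      refine ⟨s⁻¹, hinv hs, ?_⟩
      rw [QuotientGroup.mk_inv, h, ← map_inv]
      rfl }
  have hTA : ∀ i, ((Pi.single i 1 : Fin m → ℤ), (0 : (j : Fin k) → ZMod (n j))) ∈ T :=
    fun i => ⟨A i, hPA i, hA i⟩
  have hTB : ∀ j, ((0 : Fin m → ℤ), (Pi.single j 1 : (j : Fin k) → ZMod (n j))) ∈ T :=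
    fun j => ⟨B j, hPB j, hB j⟩
  have hT1 : ∀ p : Fin m → ℤ, ((p, 0) : (Fin m → ℤ) × ((j : Fin k) → ZMod (n j))) ∈ T := by
    intro p
    have hdecomp : ((p, 0) : (Fin m → ℤ) × ((j : Fin k) → ZMod (n j))) =
        ∑ i, (p i) • (((Pi.single i 1 : Fin m → ℤ), (0 : (j : Fin k) → ZMod (n j)))) := by
      rw [Prod.ext_iff]
      constructor
      · rw [Prod.fst_sum]
        simp only [Prod.smul_fst]
        rw [show (fun i => (p i) • (Pi.single i 1 : Fin m → ℤ)) = fun i => Pi.single i (p i) from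
          funext fun i => by ext j; simp [Pi.single_apply]]
        · exact (Finset.univ_sum_single p).symm
      · rw [Prod.snd_sum]
        simp
    rw [hdecomp]
    exact AddSubgroup.sum_mem T (fun i _ => AddSubgroup.zsmul_mem T (hTA i) (p i))
  have hT2 : ∀ q : (j : Fin k) → ZMod (n j),
      ((0, q) : (Fin m → ℤ) × ((j : Fin k) → ZMod (n j))) ∈ T := by
    intro q
    have hdecomp : ((0, q) : (Fin m → ℤ) × ((j : Fin k) → ZMod (n j))) =
        ∑ j, ((q j).val) • (((0 : Fin m → ℤ), (Pi.single j 1 : (j : Fin k) → ZMod (n j)))) := by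
      rw [Prod.ext_iff]
      constructor
      · rw [Prod.fst_sum]; simp
      · rw [Prod.snd_sum]
        simp only [Prod.smul_snd]
        rw [show (fun j => ((q j).val) • (Pi.single j 1 : (j : Fin k) → ZMod (n j)))
            = fun j => Pi.single j (q j) from funext fun j => by
          haveI : NeZero (n j) := ⟨by have := hn j; omega⟩
          ext l
          by_cases h : l = j
          · subst h; simp [ZMod.natCast_rightInverse (q l)]
          · simp [Pi.single_apply, h]]
        · exact (Finset.univ_sum_single q).symm
    rw [hdecomp]
    exact AddSubgroup.sum_mem T (fun j _ => AddSubgroup.nsmul_mem T (hTB j) ((q j).val))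
  set v := Multiplicative.toAdd (e.symm (QuotientGroup.mk x)) with hv
  have hvT : v ∈ T := by
    have : v = (v.1, (0 : (j : Fin k) → ZMod (n j))) + ((0 : Fin m → ℤ), v.2) := by
      rw [Prod.mk_add_mk]; simp
    rw [this]
    exact AddSubgroup.add_mem T (hT1 v.1) (hT2 v.2)
  obtain ⟨s, hs, hmk⟩ := hvT
  have hsx : (QuotientGroup.mk s : E ⧸ H) = QuotientGroup.mk x := by
    rw [hmk, hv]
    rw [show Multiplicative.ofAdd (Multiplicative.toAdd (e.symm (QuotientGroup.mk x)))
        = e.symm (QuotientGroup.mk x) from rfl]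
    exact e.apply_symm_apply _
  have hmem : s⁻¹ * x ∈ H := (QuotientGroup.eq).mp hsx
  have := hmul hs (hHP _ hmem)
  rwa [show s * (s⁻¹ * x) = x from by group] at this
end Gen

/-- If an infinite finitely generated abelian group `ℤ^(m) ⊕ ℤ_{n_1} ⊕ … ⊕ ℤ_{n_k}`
(with `m ≥ 1`, each `n_i ≥ 2`, `n_{i+1} ∣ n_i`) is `S_2`-capable, then `m ≥ 3`. -/
theorem s2Capable_infinite_fg_abelian_necessary (G : Type) [Group G]
    (m k : ℕ) (hm : 1 ≤ m) (n : Fin k → ℕ)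
    (hn : ∀ i : Fin k, 2 ≤ n i)
    (hdvd : ∀ i : Fin k, ∀ h : (i : ℕ) + 1 < k, n ⟨(i : ℕ) + 1, h⟩ ∣ n i)
    (hG : Nonempty (G ≃* Multiplicative ((Fin m → ℤ) × ((i : Fin k) → ZMod (n i)))))
    (hcap : IsS2Capable G) :
    3 ≤ m := by
  by_contra hc
  push_neg at hc
  obtain ⟨E, instE, H, instN, hH, hiso⟩ := hcap
  obtain ⟨φ⟩ := hiso
  obtain ⟨ψ⟩ := hG
  let e : Multiplicative ((Fin m → ℤ) × ((j : Fin k) → ZMod (n j))) ≃* E ⧸ H := ψ.symm.trans φ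
  let A : Fin m → E := fun i => (e (genA m k n i)).out
  let B : Fin k → E := fun j => (e (genB m k n j)).out
  have hA : ∀ i, (QuotientGroup.mk (A i) : E ⧸ H) = e (genA m k n i) := fun i =>
    QuotientGroup.out_eq' _
  have hB : ∀ j, (QuotientGroup.mk (B j) : E ⧸ H) = e (genB m k n j) := fun j =>
    QuotientGroup.out_eq' _
  -- commutators lie in H since the quotient is abelian
  have hcomm : ∀ x y : E, pcomm x y ∈ H := by
    intro x y
    rw [← QuotientGroup.eq_one_iff]
    have hq : ∀ q r : E ⧸ H, q * r = r * q := by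
      intro q r
      obtain ⟨a, rfl⟩ := e.surjective q
      obtain ⟨b, rfl⟩ := e.surjective r
      rw [← map_mul, ← map_mul, mul_comm]
    show (QuotientGroup.mk (x⁻¹ * y⁻¹ * x * y) : E ⧸ H) = 1
    rw [QuotientGroup.mk_mul, QuotientGroup.mk_mul, QuotientGroup.mk_mul,
      QuotientGroup.mk_inv, QuotientGroup.mk_inv]
    set qx : E ⧸ H := QuotientGroup.mk x
    set qy : E ⧸ H := QuotientGroup.mk y
    calc qx⁻¹ * qy⁻¹ * qx * qy = qx⁻¹ * qy⁻¹ * (qx * qy) := by group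
      _ = qx⁻¹ * qy⁻¹ * (qy * qx) := by rw [hq qx qy]
      _ = 1 := by group
  -- the common exponent N
  obtain ⟨N, hNpos, hNdvd⟩ : ∃ N : ℕ, 0 < N ∧ ∀ j : Fin k, n j ∣ N := by
    by_cases hk : 0 < k
    · refine ⟨n ⟨0, hk⟩, by have := hn ⟨0, hk⟩; omega, ?_⟩
      intro j
      have chain : ∀ v : ℕ, ∀ hv : v < k, n ⟨v, hv⟩ ∣ n ⟨0, hk⟩ := by
        intro v
        induction v with
        | zero => intro hv; exact dvd_refl _
        | succ w ih => intro hv; exact dvd_trans (hdvd ⟨w, by omega⟩ hv) (ih (by omega))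
      exact chain j.1 j.2
    · exact ⟨1, one_pos, fun j => absurd j.pos hk⟩
  -- torsion lifts: B j ^ (n j) ∈ H
  have hBH : ∀ j : Fin k, B j ^ (n j) ∈ H := by
    intro j
    rw [← QuotientGroup.eq_one_iff]
    have h1 : (QuotientGroup.mk (B j ^ (n j)) : E ⧸ H) = (QuotientGroup.mk (B j) : E ⧸ H)^(n j) :=
      by rw [QuotientGroup.mk_pow]
    have h2 : genB m k n j ^ (n j) = 1 := by
      have h3 : Multiplicative.toAdd (genB m k n j ^ (n j)) = 0 := by
        rw [toAdd_pow]
        show (n j) • ((0 : Fin m → ℤ), (Pi.single j 1 : (l : Fin k) → ZMod (n l))) = 0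
        rw [Prod.smul_mk]
        have : (n j) • (Pi.single j 1 : (l : Fin k) → ZMod (n l)) = 0 := by
          ext l
          by_cases h : l = j
          · subst h; simp [ZMod.natCast_self]
          · simp [Pi.single_apply, h]
        rw [this, smul_zero]
        rfl
      have h4 := congrArg Multiplicative.ofAdd h3
      simpa only [ofAdd_toAdd, ofAdd_zero] using h4
    rw [h1, hB j, ← map_pow, h2, map_one]
  -- killing powers for torsion generators, in each slot
  have hBslot1 : ∀ (j : Fin k) (y z u : E), (metaW (B j) y z u)^N = 1 := by
    intro j y z u
    obtain ⟨c, hcx⟩ := hNdvd j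
    rw [← pow1 H hH hcomm, hcx, pow_mul, pow1 H hH hcomm, marginW1 H hH (hBH j), one_pow]
  have hBslot2 : ∀ (j : Fin k) (x z u : E), (metaW x (B j) z u)^N = 1 := by
    intro j x z u
    obtain ⟨c, hcx⟩ := hNdvd j
    rw [← pow2 H hH hcomm, hcx, pow_mul, pow2 H hH hcomm, marginW2 H hH (hBH j), one_pow]
  have hBslot3 : ∀ (j : Fin k) (x y u : E), (metaW x y (B j) u)^N = 1 := by
    intro j x y u
    obtain ⟨c, hcx⟩ := hNdvd j
    rw [← pow3 H hH hcomm, hcx, pow_mul, pow3 H hH hcomm, marginW3 H hH (hBH j), one_pow]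
  have hBslot4 : ∀ (j : Fin k) (x y z : E), (metaW x y z (B j))^N = 1 := by
    intro j x y z
    obtain ⟨c, hcx⟩ := hNdvd j
    rw [← pow4 H hH hcomm, hcx, pow_mul, pow4 H hH hcomm, marginW4 H hH (hBH j), one_pow]
  -- pigeonhole on Fin m, m ≤ 2
  have fin2 : ∀ a b c : Fin m, a ≠ b → c = a ∨ c = b := by
    intro a b c hab
    have h1 := a.2
    have h2 := b.2
    have h3 := c.2
    have hne : a.1 ≠ b.1 := fun h => hab (Fin.ext h)
    have : c.1 = a.1 ∨ c.1 = b.1 := by omega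
    rcases this with h | h
    · exact Or.inl (Fin.ext h)
    · exact Or.inr (Fin.ext h)
  have hAA : ∀ i1 i2 i3 i4, metaW (A i1) (A i2) (A i3) (A i4) = 1 := by
    intro i1 i2 i3 i4
    by_cases h12 : i1 = i2
    · rw [h12]; exact metaW_diag12 _ _ _
    by_cases h34 : i3 = i4
    · rw [h34]; exact metaW_diag34 _ _ _
    rcases fin2 i3 i4 i1 h34 with h1 | h1 <;> rcases fin2 i3 i4 i2 h34 with h2 | h2
    · exact absurd (h1.trans h2.symm) h12
    · rw [← h1, ← h2]; exact metaW_abab _ _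
    · rw [← h1, ← h2]; exact metaW_abba _ _
    · exact absurd (h1.trans h2.symm) h12
  -- the main structural fact: every value of the word has order dividing N
  have L4 : ∀ i1 i2 i3 : Fin m, ∀ u : E, (metaW (A i1) (A i2) (A i3) u)^N = 1 := by
    intro i1 i2 i3
    refine gen H m k n hn e A B hA hB
      (fun u => (metaW (A i1) (A i2) (A i3) u)^N = 1) ?_ ?_ ?_ ?_ ?_ ?_
    · try dsimp only
      rw [metaW_one4]; exact one_pow N
    · intro a b ha hb
      try dsimp only
      rw [mult4 H hH hcomm,
        Commute.mul_pow (central H hH hcomm (A i1) (A i2) (A i3) a _),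
        ha, hb, one_mul]
    · intro a ha
      try dsimp only
      rw [inv4 H hH hcomm, inv_pow, ha, inv_one]
    · intro a haH
      try dsimp only
      rw [marginW4 H hH haH, one_pow]
    · intro i4; (try dsimp only); rw [hAA i1 i2 i3 i4, one_pow]
    · intro j; (try dsimp only); exact hBslot4 j _ _ _
  have L3 : ∀ i1 i2 : Fin m, ∀ z u : E, (metaW (A i1) (A i2) z u)^N = 1 := by
    intro i1 i2
    refine gen H m k n hn e A B hA hB
      (fun z => ∀ u : E, (metaW (A i1) (A i2) z u)^N = 1) ?_ ?_ ?_ ?_ ?_ ?_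
    · try dsimp only
      intro u; rw [metaW_one3]; exact one_pow N
    · intro a b ha hb
      try dsimp only
      intro u
      rw [mult3 H hH hcomm,
        Commute.mul_pow (central H hH hcomm (A i1) (A i2) a u _),
        ha u, hb u, one_mul]
    · intro a ha
      try dsimp only
      intro u
      rw [inv3 H hH hcomm, inv_pow, ha u, inv_one]
    · intro a haH
      try dsimp only
      intro u
      rw [marginW3 H hH haH, one_pow]
    · intro i3; (try dsimp only); exact L4 i1 i2 i3
    · intro j; (try dsimp only); intro u; exact hBslot3 j _ _ u
  have L2 : ∀ i1 : Fin m, ∀ y z u : E, (metaW (A i1) y z u)^N = 1 := by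
    intro i1
    refine gen H m k n hn e A B hA hB
      (fun y => ∀ z u : E, (metaW (A i1) y z u)^N = 1) ?_ ?_ ?_ ?_ ?_ ?_
    · try dsimp only
      intro z u; rw [metaW_one2]; exact one_pow N
    · intro a b ha hb
      try dsimp only
      intro z u
      rw [mult2 H hH hcomm,
        Commute.mul_pow (central H hH hcomm (A i1) a z u _),
        ha z u, hb z u, one_mul]
    · intro a ha
      try dsimp only
      intro z u
      rw [inv2 H hH hcomm, inv_pow, ha z u, inv_one]
    · intro a haH
      try dsimp only
      intro z u
      rw [marginW2 H hH haH, one_pow]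
    · intro i2; (try dsimp only); exact L3 i1 i2
    · intro j; (try dsimp only); intro z u; exact hBslot2 j _ z u
  have hbig : ∀ x y z u : E, (metaW x y z u)^N = 1 := by
    refine gen H m k n hn e A B hA hB
      (fun x => ∀ y z u : E, (metaW x y z u)^N = 1) ?_ ?_ ?_ ?_ ?_ ?_
    · try dsimp only
      intro y z u; rw [metaW_one1]; exact one_pow N
    · intro a b ha hb
      try dsimp only
      intro y z u
      rw [mult1 H hH hcomm,
        Commute.mul_pow (central H hH hcomm a y z u _),
        ha y z u, hb y z u, one_mul]
    · intro a ha
      try dsimp only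
      intro y z u
      rw [inv1 H hH hcomm, inv_pow, ha y z u, inv_one]
    · intro a haH
      try dsimp only
      intro y z u
      rw [marginW1 H hH haH, one_pow]
    · intro i1; (try dsimp only); exact L2 i1
    · intro j; (try dsimp only); intro y z u; exact hBslot1 j y z u
  -- therefore a^N is marginal for the infinite-order generator a
  have hm0 : 0 < m := hm
  set i0 : Fin m := ⟨0, hm0⟩ with hi0
  set a : E := A i0 with ha0
  have haN : a ^ N ∈ H := by
    have hmem : a ^ N ∈ s2MarginalSet E := by
      intro x y z u
      refine ⟨?_, ?_, ?_, ?_⟩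
      · rw [mult1 H hH hcomm, pow1 H hH hcomm, hbig, mul_one]
      · rw [mult2 H hH hcomm, pow2 H hH hcomm, hbig, mul_one]
      · rw [mult3 H hH hcomm, pow3 H hH hcomm, hbig, mul_one]
      · rw [mult4 H hH hcomm, pow4 H hH hcomm, hbig, mul_one]
    have : a ^ N ∈ (H : Set E) := hH.symm ▸ hmem
    exact this
  have hq1 : (QuotientGroup.mk (a ^ N) : E ⧸ H) = 1 := (QuotientGroup.eq_one_iff _).mpr haN
  have hq2 : (QuotientGroup.mk (a ^ N) : E ⧸ H) = e (genA m k n i0 ^ N) := by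
    rw [QuotientGroup.mk_pow, hA i0, ← map_pow]
  have hgen1 : genA m k n i0 ^ N = 1 := e.injective (by rw [← hq2, hq1, map_one])
  have hNz : (N : ℤ) = 0 := by
    have h0 := congrArg Multiplicative.toAdd hgen1
    rw [toAdd_pow] at h0
    have h1 : N • ((Pi.single i0 1 : Fin m → ℤ), (0 : (j : Fin k) → ZMod (n j))) = 0 := h0
    have h2 := congrArg Prod.fst h1
    simp only [Prod.smul_fst, Prod.fst_zero] at h2
    have h3 := congrFun h2 i0
    simpa using h3
  have : N = 0 := by exact_mod_cast hNz
  omega
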